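/- Let H = (V,E,w) be an edge-weighted hypergraph with E nonempty, let r_min := min_{e ∈ E} |e|, and let f ∈ ℝ^V be a nonzero vector with f ⊥_w 1. Then there exists a nonempty set S ⊆ V with w(S) ≤ w(V)/2 and φ(S) ≤ D_w(f) + 2·√(D_w(f)/r_min). -/

import Mathlib

open Finset

/-- An edge-weighted hypergraph on a finite vertex set `V`: a finite set of hyperedges,
each a nonempty subset of `V`, with positive weights. -/
structure EWHypergraph (V : Type*) [Fintype V] [DecidableEq V] where
  E : Finset (Finset V)
  w : Finset V → ℝ
  edge_nonempty : ∀ e ∈ E, e.Nonempty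
  w_pos : ∀ e ∈ E, 0 < w e

namespace EWHypergraph

variable {V : Type*} [Fintype V] [DecidableEq V]

/-- The weight of a vertex: total weight of hyperedges containing it. -/
noncomputable def wv (H : EWHypergraph V) (v : V) : ℝ :=
  ∑ e ∈ H.E.filter (fun e => v ∈ e), H.w e

/-- The weight of a set of vertices. -/
noncomputable def wS (H : EWHypergraph V) (S : Finset V) : ℝ := ∑ v ∈ S, H.wv v

/-- The boundary of `S`: hyperedges meeting both `S` and its complement. -/
noncomputable def bdry (H : EWHypergraph V) (S : Finset V) : Finset (Finset V) :=
  H.E.filter (fun e => (e ∩ S).Nonempty ∧ (e \ S).Nonempty)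

/-- The expansion `φ(S)` of a set of vertices. -/
noncomputable def phi (H : EWHypergraph V) (S : Finset V) : ℝ :=
  (∑ e ∈ H.bdry S, H.w e) / H.wS S

/-- `max_{u,v ∈ e} (f u - f v)^2`. -/
noncomputable def edgeDisc (H : EWHypergraph V) (f : V → ℝ) (e : Finset V) : ℝ :=
  sSup {x : ℝ | ∃ u ∈ e, ∃ v ∈ e, (f u - f v) ^ 2 = x}

/-- The discrepancy ratio `D_w(f)`. -/
noncomputable def disc (H : EWHypergraph V) (f : V → ℝ) : ℝ :=
  (∑ e ∈ H.E, H.w e * H.edgeDisc f e) / ∑ u : V, H.wv u * f u ^ 2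

/-- The weighted inner product `⟨f,g⟩_w`. -/
noncomputable def wip (H : EWHypergraph V) (f g : V → ℝ) : ℝ :=
  ∑ u : V, H.wv u * f u * g u

/-- `γ₂`: infimum of the discrepancy ratio over nonzero `f ⊥_w 1`. -/
noncomputable def gamma2 (H : EWHypergraph V) : ℝ :=
  sInf {x : ℝ | ∃ f : V → ℝ, f ≠ 0 ∧ H.wip f (fun _ => 1) = 0 ∧ H.disc f = x}

/-- The hypergraph expansion `φ_H`. -/
noncomputable def phiH (H : EWHypergraph V) : ℝ :=
  sInf {x : ℝ | ∃ S : Finset V, S.Nonempty ∧ S ≠ univ ∧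
    x = max (H.phi S) (H.phi Sᶜ)}

/-- `ζ_k`: inf over `k`-tuples of nonzero pairwise `w`-orthogonal vectors of the
sup of the discrepancy ratio over nonzero vectors in their span. -/
noncomputable def zeta (H : EWHypergraph V) (k : ℕ) : ℝ :=
  sInf {x : ℝ | ∃ f : Fin k → V → ℝ, (∀ i, f i ≠ 0) ∧
    (∀ i j, i ≠ j → H.wip (f i) (f j) = 0) ∧
    x = sSup {y : ℝ | ∃ h : V → ℝ, h ≠ 0 ∧
      h ∈ Submodule.span ℝ (Set.range f) ∧ H.disc h = y}}

/-- `ξ_k`: inf over `k`-tuples of nonzero pairwise `w`-orthogonal vectors of the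
maximum discrepancy ratio among them. -/
noncomputable def xi (H : EWHypergraph V) (k : ℕ) : ℝ :=
  sInf {x : ℝ | ∃ f : Fin k → V → ℝ, (∀ i, f i ≠ 0) ∧
    (∀ i j, i ≠ j → H.wip (f i) (f j) = 0) ∧
    x = sSup {y : ℝ | ∃ i, H.disc (f i) = y}}

/-- A sequence of procedural minimizers: `f 0` is a nonzero constant vector, each `f i`
is nonzero and `w`-orthogonal to the previous ones, and attains the infimum of the
discrepancy ratio over nonzero vectors `w`-orthogonal to the previous ones. -/
def IsProcMin (H : EWHypergraph V) {k : ℕ} (f : Fin k → V → ℝ) : Prop :=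
  (∀ i, f i ≠ 0) ∧
  (∀ i : Fin k, (i : ℕ) = 0 → ∃ c : ℝ, f i = fun _ => c) ∧
  (∀ i j : Fin k, (j : ℕ) < (i : ℕ) → H.wip (f i) (f j) = 0) ∧
  (∀ i : Fin k, 0 < (i : ℕ) → H.disc (f i) =
    sInf {x : ℝ | ∃ g : V → ℝ, g ≠ 0 ∧
      (∀ j : Fin k, (j : ℕ) < (i : ℕ) → H.wip g (f j) = 0) ∧ H.disc g = x})

end EWHypergraph

section SweepAux
open EWHypergraph
variable {V : Type*} [Fintype V] [DecidableEq V]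

lemma edgeDisc_eq' (H : EWHypergraph V) (g : V → ℝ) (e : Finset V) (he : e.Nonempty) :
    H.edgeDisc g e = (e.sup' he g - e.inf' he g) ^ 2 := by
  obtain ⟨u, hu, hgu⟩ := Finset.exists_mem_eq_sup' he g
  obtain ⟨v, hv, hgv⟩ := Finset.exists_mem_eq_inf' he g
  apply IsGreatest.csSup_eq
  constructor
  · exact ⟨u, hu, v, hv, by rw [hgu, hgv]⟩
  · rintro x ⟨a, ha, b, hb, rfl⟩
    have h1 : g a ≤ e.sup' he g := Finset.le_sup' g ha
    have h2 : e.inf' he g ≤ g b := Finset.inf'_le g hb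
    have h3 : g b ≤ e.sup' he g := Finset.le_sup' g hb
    have h4 : e.inf' he g ≤ g a := Finset.inf'_le g ha
    apply sq_le_sq' <;> linarith

lemma wv_nonneg' (H : EWHypergraph V) (v : V) : 0 ≤ H.wv v :=
  Finset.sum_nonneg fun e he => le_of_lt (H.w_pos e (Finset.mem_filter.mp he).1)

lemma wS_nonneg' (H : EWHypergraph V) (S : Finset V) : 0 ≤ H.wS S :=
  Finset.sum_nonneg fun v _ => wv_nonneg' H v

lemma wS_mono' (H : EWHypergraph V) {S T : Finset V} (h : S ⊆ T) : H.wS S ≤ H.wS T :=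
  Finset.sum_le_sum_of_subset_of_nonneg h fun v _ _ => wv_nonneg' H v

lemma exchange (H : EWHypergraph V) (h : V → ℝ) :
    ∑ v : V, H.wv v * h v = ∑ e ∈ H.E, H.w e * ∑ v ∈ e, h v := by
  unfold EWHypergraph.wv
  simp_rw [Finset.sum_mul, Finset.sum_filter]
  rw [Finset.sum_comm]
  refine Finset.sum_congr rfl fun e _ => ?_
  rw [Finset.sum_ite_mem, Finset.univ_inter, Finset.mul_sum]

lemma exists_median (H : EWHypergraph V) (f : V → ℝ) (hV : (Finset.univ : Finset V).Nonempty) :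
    ∃ c : ℝ, H.wS (univ.filter (fun v => c < f v)) ≤ H.wS univ / 2 ∧
             H.wS (univ.filter (fun v => f v < c)) ≤ H.wS univ / 2 := by
  classical
  set W := H.wS univ with hW
  have hW0 : 0 ≤ W := wS_nonneg' H _
  set T := Finset.image f univ with hT
  have hTne : T.Nonempty := hV.image f
  set G := T.filter (fun t => W / 2 ≤ H.wS (univ.filter (fun v => f v ≤ t))) with hG
  have hGne : G.Nonempty := by
    refine ⟨T.max' hTne, Finset.mem_filter.mpr ⟨T.max'_mem hTne, ?_⟩⟩
    have hfil : univ.filter (fun v => f v ≤ T.max' hTne) = univ := by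
      apply Finset.filter_true_of_mem
      intro v _
      exact Finset.le_max' T (f v) (Finset.mem_image_of_mem f (mem_univ v))
    rw [hfil]
    linarith
  set c := G.min' hGne with hc
  have hcG : c ∈ G := G.min'_mem hGne
  have hcA : W / 2 ≤ H.wS (univ.filter (fun v => f v ≤ c)) := (Finset.mem_filter.mp hcG).2
  refine ⟨c, ?_, ?_⟩
  · have hsplit : H.wS (univ.filter (fun v => f v ≤ c)) +
        H.wS (univ.filter (fun v => c < f v)) = W := by
      rw [hW]
      unfold EWHypergraph.wS
      rw [← Finset.sum_filter_add_sum_filter_not univ (fun v => f v ≤ c) H.wv]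
      congr 1
      apply Finset.sum_congr _ (fun _ _ => rfl)
      apply Finset.filter_congr
      intro v _
      simp [not_le]
    linarith
  · set B := univ.filter (fun v => f v < c) with hB
    rcases B.eq_empty_or_nonempty with hBe | hBne
    · rw [hBe]
      unfold EWHypergraph.wS
      simp
      linarith
    · set t' := B.sup' hBne f with ht'
      have ht'c : t' < c := by
        obtain ⟨b, hb, hfb⟩ := Finset.exists_mem_eq_sup' hBne f
        rw [ht', hfb]
        exact (Finset.mem_filter.mp hb).2
      have ht'T : t' ∈ T := by
        obtain ⟨b, hb, hfb⟩ := Finset.exists_mem_eq_sup' hBne f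
        rw [ht', hfb]
        exact Finset.mem_image_of_mem f (mem_univ b)
      have ht'G : t' ∉ G := by
        intro hmem
        have := G.min'_le t' hmem
        rw [← hc] at this
        linarith
      have hlt : H.wS (univ.filter (fun v => f v ≤ t')) < W / 2 :=
        not_le.mp (fun h => ht'G (Finset.mem_filter.mpr ⟨ht'T, h⟩))
      have hsub : B ⊆ univ.filter (fun v => f v ≤ t') := by
        intro v hv
        exact Finset.mem_filter.mpr ⟨mem_univ v, Finset.le_sup' f hv⟩
      exact le_of_lt (lt_of_le_of_lt (wS_mono' H hsub) hlt)

lemma tele (G : ℕ → ℝ) (a b : ℕ) (h : a ≤ b) :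
    ∑ i ∈ Finset.Ico (a + 1) (b + 1), (G i - G (i - 1)) = G b - G a := by
  induction b, h using Nat.le_induction with
  | base => simp
  | succ b hab ih =>
    rw [Finset.sum_Ico_succ_top (by omega : a + 1 ≤ b + 1), ih]
    simp

end SweepAux

section Sweep
open EWHypergraph
variable {V : Type*} [Fintype V] [DecidableEq V]

lemma sweep (H : EWHypergraph V) (hw : ∀ v : V, 0 < H.wv v) (g : V → ℝ) (D ρ : ℝ)
    (hg0 : ∀ v, 0 ≤ g v) (hρ : 0 < ρ) (hρe : ∀ e ∈ H.E, ρ ≤ (e.card : ℝ))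
    (hSg : 0 < ∑ u : V, H.wv u * g u ^ 2)
    (hsupp : H.wS (Finset.univ.filter fun v => g v ≠ 0) ≤ H.wS Finset.univ / 2)
    (hWpos : 0 < H.wS Finset.univ)
    (hD : 0 ≤ D)
    (hNg : ∑ e ∈ H.E, H.w e * H.edgeDisc g e ≤ D * ∑ u : V, H.wv u * g u ^ 2) :
    ∃ S : Finset V, S.Nonempty ∧ H.wS S ≤ H.wS Finset.univ / 2 ∧
      H.phi S ≤ D + 2 * Real.sqrt (D / ρ) := by
  classical
  set Sg := ∑ u : V, H.wv u * g u ^ 2 with hSgdef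
  set C := D + 2 * Real.sqrt (D / ρ) with hCdef
  have hVne : (Finset.univ : Finset V).Nonempty := by
    rcases Finset.eq_empty_or_nonempty (Finset.univ : Finset V) with h | h
    · exfalso
      unfold EWHypergraph.wS at hWpos
      rw [h] at hWpos
      simp at hWpos
    · exact h
  -- sorted values of g
  set T := Finset.image g Finset.univ with hTdef
  have hTne : T.Nonempty := hVne.image g
  set n := T.card with hndef
  set l := T.sort (· ≤ ·) with hldef
  have hlen : l.length = n := Finset.length_sort _
  set t : ℕ → ℝ := fun i => l.getD i 0 with htdef
  have hmem : ∀ i, i < n → t i ∈ T := by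
    intro i hi
    have hi' : i < l.length := by omega
    simp only [htdef]
    simp only [List.getD_eq_getElem l 0 hi']
    exact (Finset.mem_sort _).mp (l.getElem_mem hi')
  have hsurj : ∀ x ∈ T, ∃ i, i < n ∧ t i = x := by
    intro x hx
    have : x ∈ l := (Finset.mem_sort (α := ℝ) (· ≤ ·)).mpr hx
    obtain ⟨i, hi, heq⟩ := List.mem_iff_getElem.mp this
    exact ⟨i, by omega, by simp only [htdef]; simp only [List.getD_eq_getElem l 0 hi]; exact heq⟩
  have hsorted : ∀ i j, i < j → j < n → t i < t j := by
    intro i j hij hj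
    have hslt : l.Pairwise (· < ·) := (Finset.sortedLT_sort T).pairwise
    have hj' : j < l.length := by omega
    have hi' : i < l.length := by omega
    have := List.pairwise_iff_getElem.mp hslt i j hi' hj' hij
    simp only [htdef]
    simpa only [List.getD_eq_getElem l 0 hi', List.getD_eq_getElem l 0 hj'] using this
  have hmono : ∀ i j, i ≤ j → j < n → t i ≤ t j := by
    intro i j hij hj
    rcases eq_or_lt_of_le hij with rfl | h
    · exact le_rfl
    · exact le_of_lt (hsorted i j h hj)
  have htnn : ∀ i, i < n → 0 ≤ t i := by
    intro i hi
    obtain ⟨v, _, hv⟩ := Finset.mem_image.mp (hmem i hi)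
    rw [← hv]
    exact hg0 v
  have hn0 : 0 < n := Finset.card_pos.mpr hTne
  have h0T : (0 : ℝ) ∈ T := by
    have hex : ∃ v, g v = 0 := by
      by_contra hcon
      push_neg at hcon
      have : Finset.univ.filter (fun v => g v ≠ 0) = Finset.univ :=
        Finset.filter_true_of_mem fun v _ => hcon v
      rw [this] at hsupp
      linarith
    obtain ⟨v, hv⟩ := hex
    rw [← hv]
    exact Finset.mem_image_of_mem g (mem_univ v)
  have ht0 : t 0 = 0 := by
    obtain ⟨i0, hi0, hti0⟩ := hsurj 0 h0T
    have h1 : t 0 ≤ t i0 := hmono 0 i0 (Nat.zero_le _) hi0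
    have h2 : 0 ≤ t 0 := htnn 0 hn0
    rw [hti0] at h1
    linarith
  have hn2 : 2 ≤ n := by
    have hex : ∃ v, g v ≠ 0 := by
      by_contra hcon
      push_neg at hcon
      have : Sg = 0 := by
        rw [hSgdef]
        apply Finset.sum_eq_zero
        intro u _
        rw [hcon u]
        ring
      linarith
    obtain ⟨v, hv⟩ := hex
    have : 1 < T.card := Finset.one_lt_card.mpr
      ⟨g v, Finset.mem_image_of_mem g (mem_univ v), 0, h0T, hv⟩
    omega
  -- sweep sets
  set S : ℕ → Finset V := fun i => Finset.univ.filter (fun v => t i ≤ g v) with hSdef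
  set δ : ℕ → ℝ := fun i => t i ^ 2 - t (i - 1) ^ 2 with hδdef
  set cut : ℕ → ℝ := fun i => ∑ e ∈ H.bdry (S i), H.w e with hcutdef
  -- volume identity
  have hvol : ∑ i ∈ Finset.Ico 1 n, δ i * H.wS (S i) = Sg := by
    have h1 : ∀ i, δ i * H.wS (S i) = ∑ v : V, (if t i ≤ g v then δ i * H.wv v else 0) := by
      intro i
      unfold EWHypergraph.wS
      simp only [hSdef]
      rw [Finset.sum_filter, Finset.mul_sum]
      exact Finset.sum_congr rfl fun v _ => by split <;> simp
    calc ∑ i ∈ Finset.Ico 1 n, δ i * H.wS (S i)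
        = ∑ i ∈ Finset.Ico 1 n, ∑ v : V, (if t i ≤ g v then δ i * H.wv v else 0) :=
          Finset.sum_congr rfl fun i _ => h1 i
      _ = ∑ v : V, ∑ i ∈ Finset.Ico 1 n, (if t i ≤ g v then δ i * H.wv v else 0) :=
          Finset.sum_comm
      _ = Sg := by
          rw [hSgdef]
          refine Finset.sum_congr rfl fun v _ => ?_
          obtain ⟨j, hj, htj⟩ := hsurj (g v) (Finset.mem_image_of_mem g (mem_univ v))
          have hfe : (Finset.Ico 1 n).filter (fun i => t i ≤ g v) = Finset.Ico 1 (j + 1) := by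
            ext i
            simp only [Finset.mem_filter, Finset.mem_Ico]
            constructor
            · rintro ⟨⟨h1i, h2i⟩, h3i⟩
              refine ⟨h1i, ?_⟩
              by_contra hcon
              push_neg at hcon
              have := hsorted j i (by omega) h2i
              rw [htj] at this
              linarith
            · rintro ⟨h1i, h2i⟩
              have hin : i < n := by omega
              refine ⟨⟨h1i, hin⟩, ?_⟩
              calc t i ≤ t j := hmono i j (by omega) hj
                _ = g v := htj
          rw [← Finset.sum_filter, hfe, ← Finset.sum_mul]
          have hte : ∑ i ∈ Finset.Ico 1 (j + 1), δ i = g v ^ 2 := by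
            have h : ∑ i ∈ Finset.Ico (0 + 1) (j + 1), (t i ^ 2 - t (i - 1) ^ 2)
                = t j ^ 2 - t 0 ^ 2 := tele (fun i => t i ^ 2) 0 j (Nat.zero_le j)
            simp only [Nat.zero_add] at h
            simp only [hδdef]
            rw [h, ht0, htj]
            ring
          rw [hte]
          ring
  -- per-edge max/min
  set Mf : Finset V → ℝ := fun e => if he : e.Nonempty then e.sup' he g else 0 with hMfdef
  set mf : Finset V → ℝ := fun e => if he : e.Nonempty then e.inf' he g else 0 with hmfdef
  have hMfe : ∀ e ∈ H.E, ∀ he : e.Nonempty, Mf e = e.sup' he g := by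
    intro e _ he
    simp only [hMfdef]
    simp [he]
  have hmfe : ∀ e ∈ H.E, ∀ he : e.Nonempty, mf e = e.inf' he g := by
    intro e _ he
    simp only [hmfdef]
    simp [he]
  have hmM : ∀ e ∈ H.E, mf e ≤ Mf e := by
    intro e heE
    have he := H.edge_nonempty e heE
    rw [hMfe e heE he, hmfe e heE he]
    obtain ⟨v, hv⟩ := he
    exact le_trans (Finset.inf'_le g hv) (Finset.le_sup' g hv)
  have hm0 : ∀ e ∈ H.E, 0 ≤ mf e := by
    intro e heE
    have he := H.edge_nonempty e heE
    rw [hmfe e heE he]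
    exact Finset.le_inf' he g fun v _ => hg0 v
  have hdisc : ∀ e ∈ H.E, H.edgeDisc g e = (Mf e - mf e) ^ 2 := by
    intro e heE
    have he := H.edge_nonempty e heE
    rw [hMfe e heE he, hmfe e heE he, edgeDisc_eq' H g e he]
  -- cut identity
  have hcut : ∑ i ∈ Finset.Ico 1 n, δ i * cut i
      = ∑ e ∈ H.E, H.w e * (Mf e ^ 2 - mf e ^ 2) := by
    have h1 : ∀ i, δ i * cut i = ∑ e ∈ H.E,
        (if (e ∩ S i).Nonempty ∧ (e \ S i).Nonempty then δ i * H.w e else 0) := by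
      intro i
      simp only [hcutdef]
      unfold EWHypergraph.bdry
      rw [Finset.sum_filter, Finset.mul_sum]
      exact Finset.sum_congr rfl fun e _ => by split <;> simp
    calc ∑ i ∈ Finset.Ico 1 n, δ i * cut i
        = ∑ i ∈ Finset.Ico 1 n, ∑ e ∈ H.E,
            (if (e ∩ S i).Nonempty ∧ (e \ S i).Nonempty then δ i * H.w e else 0) :=
          Finset.sum_congr rfl fun i _ => h1 i
      _ = ∑ e ∈ H.E, ∑ i ∈ Finset.Ico 1 n,
            (if (e ∩ S i).Nonempty ∧ (e \ S i).Nonempty then δ i * H.w e else 0) :=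
          Finset.sum_comm
      _ = ∑ e ∈ H.E, H.w e * (Mf e ^ 2 - mf e ^ 2) := by
          refine Finset.sum_congr rfl fun e heE => ?_
          have he := H.edge_nonempty e heE
          have hMT : Mf e ∈ T := by
            obtain ⟨u, hu, hgu⟩ := Finset.exists_mem_eq_sup' he g
            rw [hMfe e heE he, hgu]
            exact Finset.mem_image_of_mem g (mem_univ u)
          have hmT : mf e ∈ T := by
            obtain ⟨u, hu, hgu⟩ := Finset.exists_mem_eq_inf' he g
            rw [hmfe e heE he, hgu]
            exact Finset.mem_image_of_mem g (mem_univ u)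
          obtain ⟨a, ha, hta⟩ := hsurj (mf e) hmT
          obtain ⟨b, hb, htb⟩ := hsurj (Mf e) hMT
          have hab : a ≤ b := by
            by_contra hcon
            push_neg at hcon
            have := hsorted b a hcon ha
            rw [hta, htb] at this
            exact absurd (hmM e heE) (not_le.mpr this)
          have hcross : ∀ i, i < n →
              (((e ∩ S i).Nonempty ∧ (e \ S i).Nonempty) ↔ (mf e < t i ∧ t i ≤ Mf e)) := by
            intro i hi
            constructor
            · rintro ⟨⟨u, hu⟩, ⟨x, hx⟩⟩
              rw [Finset.mem_inter] at hu
              rw [Finset.mem_sdiff] at hx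
              obtain ⟨hu1, hu2⟩ := hu
              obtain ⟨hx1, hx2⟩ := hx
              simp only [hSdef] at hu2 hx2
              simp only [Finset.mem_filter, Finset.mem_univ, true_and] at hu2 hx2
              push_neg at hx2
              constructor
              · calc mf e ≤ g x := by
                      rw [hmfe e heE he]; exact Finset.inf'_le g hx1
                  _ < t i := hx2
              · calc t i ≤ g u := hu2
                  _ ≤ Mf e := by rw [hMfe e heE he]; exact Finset.le_sup' g hu1
            · rintro ⟨h1i, h2i⟩
              constructor
              · obtain ⟨u, hu, hgu⟩ := Finset.exists_mem_eq_sup' he g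
                refine ⟨u, Finset.mem_inter.mpr ⟨hu, ?_⟩⟩
                simp only [hSdef]
                simp only [Finset.mem_filter, Finset.mem_univ, true_and]
                rw [← hgu, ← hMfe e heE he]
                exact h2i
              · obtain ⟨u, hu, hgu⟩ := Finset.exists_mem_eq_inf' he g
                refine ⟨u, Finset.mem_sdiff.mpr ⟨hu, ?_⟩⟩
                simp only [hSdef]
                simp only [Finset.mem_filter, Finset.mem_univ, true_and]
                rw [not_le, ← hgu, ← hmfe e heE he]
                exact h1i
          have hfe : (Finset.Ico 1 n).filter
              (fun i => (e ∩ S i).Nonempty ∧ (e \ S i).Nonempty)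
              = Finset.Ico (a + 1) (b + 1) := by
            ext i
            simp only [Finset.mem_filter, Finset.mem_Ico]
            constructor
            · rintro ⟨⟨h1i, h2i⟩, hP⟩
              rw [hcross i h2i] at hP
              obtain ⟨hP1, hP2⟩ := hP
              constructor
              · by_contra hcon
                push_neg at hcon
                have hle : i ≤ a := by omega
                have := hmono i a hle ha
                rw [hta] at this
                linarith
              · by_contra hcon
                push_neg at hcon
                have := hsorted b i (by omega) h2i
                rw [htb] at this
                linarith
            · rintro ⟨h1i, h2i⟩
              have hin : i < n := by omega
              refine ⟨⟨by omega, hin⟩, ?_⟩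
              rw [hcross i hin]
              constructor
              · rw [← hta]
                exact hsorted a i (by omega) hin
              · rw [← htb]
                exact hmono i b (by omega) hb
          rw [← Finset.sum_filter]
          rw [hfe]
          rw [← Finset.sum_mul]
          have hte : ∑ i ∈ Finset.Ico (a + 1) (b + 1), δ i = Mf e ^ 2 - mf e ^ 2 := by
            have h : ∑ i ∈ Finset.Ico (a + 1) (b + 1), (t i ^ 2 - t (i - 1) ^ 2)
                = t b ^ 2 - t a ^ 2 := tele (fun i => t i ^ 2) a b hab
            simp only [hδdef]
            rw [h, hta, htb]
          rw [hte]
          ring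
  -- edge bound
  have hedg : ∑ e ∈ H.E, H.w e * (Mf e ^ 2 - mf e ^ 2) ≤ C * Sg := by
    have hwnn : ∀ e ∈ H.E, 0 ≤ H.w e := fun e heE => le_of_lt (H.w_pos e heE)
    have hfirst : ∑ e ∈ H.E, H.w e * (Mf e - mf e) ^ 2 ≤ D * Sg := by
      calc ∑ e ∈ H.E, H.w e * (Mf e - mf e) ^ 2
          = ∑ e ∈ H.E, H.w e * H.edgeDisc g e :=
            Finset.sum_congr rfl fun e heE => by rw [hdisc e heE]
        _ ≤ D * Sg := hNg
    have hmsq : ∑ e ∈ H.E, H.w e * mf e ^ 2 ≤ Sg / ρ := by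
      have hper : ∀ e ∈ H.E, H.w e * mf e ^ 2 ≤ H.w e * ((∑ v ∈ e, g v ^ 2) / ρ) := by
        intro e heE
        have he := H.edge_nonempty e heE
        have hcard : (e.card : ℝ) * mf e ^ 2 ≤ ∑ v ∈ e, g v ^ 2 := by
          calc (e.card : ℝ) * mf e ^ 2 = ∑ _v ∈ e, mf e ^ 2 := by
                rw [Finset.sum_const, nsmul_eq_mul]
            _ ≤ ∑ v ∈ e, g v ^ 2 := Finset.sum_le_sum fun v hv => by
                have h1 : mf e ≤ g v := by
                  rw [hmfe e heE he]; exact Finset.inf'_le g hv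
                exact pow_le_pow_left₀ (hm0 e heE) h1 2
        have hρc : ρ * mf e ^ 2 ≤ (e.card : ℝ) * mf e ^ 2 :=
          mul_le_mul_of_nonneg_right (hρe e heE) (sq_nonneg _)
        have : mf e ^ 2 ≤ (∑ v ∈ e, g v ^ 2) / ρ := by
          rw [le_div_iff₀ hρ]
          calc mf e ^ 2 * ρ = ρ * mf e ^ 2 := by ring
            _ ≤ (e.card : ℝ) * mf e ^ 2 := hρc
            _ ≤ ∑ v ∈ e, g v ^ 2 := hcard
        exact mul_le_mul_of_nonneg_left this (hwnn e heE)
      calc ∑ e ∈ H.E, H.w e * mf e ^ 2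
          ≤ ∑ e ∈ H.E, H.w e * ((∑ v ∈ e, g v ^ 2) / ρ) := Finset.sum_le_sum hper
        _ = (∑ e ∈ H.E, H.w e * ∑ v ∈ e, g v ^ 2) / ρ := by
            rw [Finset.sum_div]
            exact Finset.sum_congr rfl fun e _ => by ring
        _ = Sg / ρ := by rw [hSgdef, exchange H (fun v => g v ^ 2)]
    have hCS := Real.sum_mul_le_sqrt_mul_sqrt H.E
      (fun e => Real.sqrt (H.w e) * mf e) (fun e => Real.sqrt (H.w e) * (Mf e - mf e))
    have hsq1 : ∀ e ∈ H.E, (Real.sqrt (H.w e) * mf e) ^ 2 = H.w e * mf e ^ 2 := by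
      intro e heE
      rw [mul_pow, Real.sq_sqrt (hwnn e heE)]
    have hsq2 : ∀ e ∈ H.E, (Real.sqrt (H.w e) * (Mf e - mf e)) ^ 2
        = H.w e * (Mf e - mf e) ^ 2 := by
      intro e heE
      rw [mul_pow, Real.sq_sqrt (hwnn e heE)]
    have hprod : ∀ e ∈ H.E, (Real.sqrt (H.w e) * mf e) * (Real.sqrt (H.w e) * (Mf e - mf e))
        = H.w e * (mf e * (Mf e - mf e)) := by
      intro e heE
      have : Real.sqrt (H.w e) * Real.sqrt (H.w e) = H.w e := Real.mul_self_sqrt (hwnn e heE)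
      calc (Real.sqrt (H.w e) * mf e) * (Real.sqrt (H.w e) * (Mf e - mf e))
          = (Real.sqrt (H.w e) * Real.sqrt (H.w e)) * (mf e * (Mf e - mf e)) := by ring
        _ = H.w e * (mf e * (Mf e - mf e)) := by rw [this]
    rw [Finset.sum_congr rfl hsq1, Finset.sum_congr rfl hsq2, Finset.sum_congr rfl hprod] at hCS
    have hcross : ∑ e ∈ H.E, H.w e * (mf e * (Mf e - mf e))
        ≤ Real.sqrt (Sg / ρ) * Real.sqrt (D * Sg) := by
      refine le_trans hCS ?_
      have h1 : Real.sqrt (∑ e ∈ H.E, H.w e * mf e ^ 2) ≤ Real.sqrt (Sg / ρ) :=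
        Real.sqrt_le_sqrt hmsq
      have h2 : Real.sqrt (∑ e ∈ H.E, H.w e * (Mf e - mf e) ^ 2) ≤ Real.sqrt (D * Sg) :=
        Real.sqrt_le_sqrt hfirst
      exact mul_le_mul h1 h2 (Real.sqrt_nonneg _) (Real.sqrt_nonneg _)
    have hsqrtid : Real.sqrt (Sg / ρ) * Real.sqrt (D * Sg) = Real.sqrt (D / ρ) * Sg := by
      rw [← Real.sqrt_mul (by positivity) (D * Sg)]
      have : Sg / ρ * (D * Sg) = (D / ρ) * Sg ^ 2 := by ring
      rw [this, Real.sqrt_mul (by positivity) (Sg ^ 2), Real.sqrt_sq (le_of_lt hSg)]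
    calc ∑ e ∈ H.E, H.w e * (Mf e ^ 2 - mf e ^ 2)
        = (∑ e ∈ H.E, H.w e * (Mf e - mf e) ^ 2)
          + 2 * ∑ e ∈ H.E, H.w e * (mf e * (Mf e - mf e)) := by
          rw [Finset.mul_sum, ← Finset.sum_add_distrib]
          exact Finset.sum_congr rfl fun e _ => by ring
      _ ≤ D * Sg + 2 * (Real.sqrt (Sg / ρ) * Real.sqrt (D * Sg)) := by
          have := hcross
          linarith
      _ = C * Sg := by
          rw [hsqrtid, hCdef]
          ring
  -- find good threshold
  have hex : ∃ i ∈ Finset.Ico 1 n, cut i ≤ C * H.wS (S i) := by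
    by_contra hcon
    push_neg at hcon
    have hne : (Finset.Ico 1 n).Nonempty := ⟨1, Finset.mem_Ico.mpr ⟨le_rfl, by omega⟩⟩
    have hδpos : ∀ i ∈ Finset.Ico 1 n, 0 < δ i := by
      intro i hi
      rw [Finset.mem_Ico] at hi
      have h1 : t (i - 1) < t i := hsorted (i - 1) i (by omega) hi.2
      have h2 : 0 ≤ t (i - 1) := htnn (i - 1) (by omega)
      simp only [hδdef]
      nlinarith
    have hstrict : ∑ i ∈ Finset.Ico 1 n, δ i * (C * H.wS (S i))
        < ∑ i ∈ Finset.Ico 1 n, δ i * cut i :=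
      Finset.sum_lt_sum_of_nonempty hne fun i hi =>
        mul_lt_mul_of_pos_left (hcon i hi) (hδpos i hi)
    have heq : ∑ i ∈ Finset.Ico 1 n, δ i * (C * H.wS (S i)) = C * Sg := by
      rw [← hvol, Finset.mul_sum]
      exact Finset.sum_congr rfl fun i _ => by ring
    rw [heq, hcut] at hstrict
    linarith
  obtain ⟨i, hi, hle⟩ := hex
  rw [Finset.mem_Ico] at hi
  have hSine : (S i).Nonempty := by
    obtain ⟨vmax, _, hvmax⟩ := Finset.exists_max_image Finset.univ g hVne
    obtain ⟨u, _, hgu⟩ := Finset.mem_image.mp (hmem i hi.2)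
    refine ⟨vmax, ?_⟩
    simp only [hSdef]
    simp only [Finset.mem_filter, Finset.mem_univ, true_and]
    rw [← hgu]
    exact hvmax u (mem_univ u)
  refine ⟨S i, hSine, ?_, ?_⟩
  · have hsub : S i ⊆ Finset.univ.filter (fun v => g v ≠ 0) := by
      intro v hv
      simp only [hSdef] at hv
      simp only [Finset.mem_filter, Finset.mem_univ, true_and] at hv ⊢
      have h1 : t 0 < t i := hsorted 0 i (by omega) hi.2
      rw [ht0] at h1
      intro h
      rw [h] at hv
      linarith
    exact le_trans (wS_mono' H hsub) hsupp
  · have hpos : 0 < H.wS (S i) := Finset.sum_pos (fun v _ => hw v) hSine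
    unfold EWHypergraph.phi
    rw [div_le_iff₀ hpos]
    exact hle

end Sweep

set_option maxHeartbeats 2000000 in
/-- Sweep-cut rounding: for a nonzero `f ⊥_w 1` there is a nonempty `S` with
`w(S) ≤ w(V)/2` and `φ(S) ≤ D_w(f) + 2√(D_w(f)/r_min)`. -/
theorem hypergraph_sweep_rounding {V : Type*} [Fintype V] [DecidableEq V]
    (H : EWHypergraph V) (hw : ∀ v : V, 0 < H.wv v) (hE : H.E.Nonempty)
    (f : V → ℝ) (hf : f ≠ 0) (horth : H.wip f (fun _ => 1) = 0) :
    ∃ S : Finset V, S.Nonempty ∧ H.wS S ≤ H.wS Finset.univ / 2 ∧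
      H.phi S ≤ H.disc f +
        2 * Real.sqrt (H.disc f /
          (((H.E.image Finset.card).min' (hE.image Finset.card) : ℕ) : ℝ)) := by
  classical
  have hE' := hE
  obtain ⟨e₀, he₀⟩ := hE'
  obtain ⟨v₀, hv₀⟩ := H.edge_nonempty e₀ he₀
  have hVne : (Finset.univ : Finset V).Nonempty := ⟨v₀, mem_univ v₀⟩
  have hWpos : 0 < H.wS Finset.univ := Finset.sum_pos (fun v _ => hw v) hVne
  set rn : ℕ := (H.E.image Finset.card).min' (hE.image Finset.card) with hrdef
  have hrmem : rn ∈ H.E.image Finset.card := Finset.min'_mem _ _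
  have hr1 : 1 ≤ rn := by
    obtain ⟨e, heE, hec⟩ := Finset.mem_image.mp hrmem
    rw [← hec]
    exact Finset.card_pos.mpr (H.edge_nonempty e heE)
  have hrpos : (0 : ℝ) < (rn : ℝ) := by exact_mod_cast hr1
  have hre : ∀ e ∈ H.E, (rn : ℝ) ≤ (e.card : ℝ) := fun e heE => by
    exact_mod_cast Finset.min'_le _ _ (Finset.mem_image_of_mem Finset.card heE)
  set D := H.disc f with hDdef
  have hden : 0 < ∑ u : V, H.wv u * f u ^ 2 := by
    have hfv : ∃ v, f v ≠ 0 := by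
      by_contra hcon
      push_neg at hcon
      exact hf (funext hcon)
    obtain ⟨v, hv⟩ := hfv
    apply Finset.sum_pos' (fun u _ => mul_nonneg (wv_nonneg' H u) (sq_nonneg _))
    exact ⟨v, mem_univ v, mul_pos (hw v) (by positivity)⟩
  have hedN : ∀ (h : V → ℝ), ∀ e ∈ H.E, 0 ≤ H.edgeDisc h e := by
    intro h e heE
    rw [edgeDisc_eq' H h e (H.edge_nonempty e heE)]
    positivity
  have hnum : 0 ≤ ∑ e ∈ H.E, H.w e * H.edgeDisc f e :=
    Finset.sum_nonneg fun e heE => mul_nonneg (le_of_lt (H.w_pos e heE)) (hedN f e heE)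
  have hD0 : 0 ≤ D := div_nonneg hnum (le_of_lt hden)
  have hNf : ∑ e ∈ H.E, H.w e * H.edgeDisc f e = D * ∑ u : V, H.wv u * f u ^ 2 := by
    rw [hDdef]
    unfold EWHypergraph.disc
    rw [div_mul_cancel₀ _ (ne_of_gt hden)]
  have hip : ∑ u : V, H.wv u * f u = 0 := by
    unfold EWHypergraph.wip at horth
    simpa using horth
  obtain ⟨c, hc1, hc2⟩ := exists_median H f hVne
  -- shifted norm
  have hnorm : ∑ u : V, H.wv u * (f u - c) ^ 2
      = (∑ u : V, H.wv u * f u ^ 2) + c ^ 2 * H.wS Finset.univ := by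
    have hterm : ∀ u : V, H.wv u * (f u - c) ^ 2
        = H.wv u * f u ^ 2 - 2 * c * (H.wv u * f u) + c ^ 2 * H.wv u := fun u => by ring
    rw [Finset.sum_congr rfl fun u _ => hterm u]
    rw [Finset.sum_add_distrib, Finset.sum_sub_distrib, ← Finset.mul_sum, ← Finset.mul_sum, hip]
    have hWu : H.wS Finset.univ = ∑ u : V, H.wv u := rfl
    rw [hWu]
    ring
  -- positive and negative parts
  set gp : V → ℝ := fun v => max (f v - c) 0 with hgpdef
  set gm : V → ℝ := fun v => max (-(f v - c)) 0 with hgmdef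
  have hgp0 : ∀ v, 0 ≤ gp v := fun v => le_max_right _ _
  have hgm0 : ∀ v, 0 ≤ gm v := fun v => le_max_right _ _
  have hpm : ∀ v, gp v ^ 2 + gm v ^ 2 = (f v - c) ^ 2 := by
    intro v
    simp only [hgpdef, hgmdef]
    rcases le_total (f v) c with h | h
    · rw [max_eq_right (by linarith), max_eq_left (by linarith)]
      ring
    · rw [max_eq_left (by linarith), max_eq_right (by linarith)]
      ring
  set Sp := ∑ u : V, H.wv u * gp u ^ 2 with hSpdef
  set Sm := ∑ u : V, H.wv u * gm u ^ 2 with hSmdef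
  have hSsum : Sp + Sm = ∑ u : V, H.wv u * (f u - c) ^ 2 := by
    rw [hSpdef, hSmdef, ← Finset.sum_add_distrib]
    exact Finset.sum_congr rfl fun u _ => by rw [← hpm u]; ring
  have hSp0 : 0 ≤ Sp := Finset.sum_nonneg fun u _ => mul_nonneg (wv_nonneg' H u) (sq_nonneg _)
  have hSm0 : 0 ≤ Sm := Finset.sum_nonneg fun u _ => mul_nonneg (wv_nonneg' H u) (sq_nonneg _)
  -- edge discrepancy split
  have hshift : ∀ e ∈ H.E, H.edgeDisc (fun v => f v - c) e = H.edgeDisc f e := by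
    intro e heE
    unfold EWHypergraph.edgeDisc
    congr 1
    ext x
    simp only [Set.mem_setOf_eq]
    constructor
    · rintro ⟨u, hu, v, hv, h⟩
      exact ⟨u, hu, v, hv, by rw [← h]; ring⟩
    · rintro ⟨u, hu, v, hv, h⟩
      exact ⟨u, hu, v, hv, by rw [← h]; ring⟩
  have hsplit : ∀ e ∈ H.E,
      H.edgeDisc gp e + H.edgeDisc gm e ≤ H.edgeDisc (fun v => f v - c) e := by
    intro e heE
    have he := H.edge_nonempty e heE
    set M := e.sup' he (fun v => f v - c) with hM
    set m := e.inf' he (fun v => f v - c) with hm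
    have hmM : m ≤ M := by
      obtain ⟨v, hv⟩ := id he
      rw [hM, hm]
      exact le_trans (Finset.inf'_le (fun v => f v - c) hv)
        (Finset.le_sup' (fun v => f v - c) hv)
    rw [edgeDisc_eq' H gp e he, edgeDisc_eq' H gm e he, edgeDisc_eq' H _ e he, ← hM, ← hm]
    set A := max M 0 - max m 0 with hA
    set B := max (-m) 0 - max (-M) 0 with hB
    have hA0 : 0 ≤ A := sub_nonneg.mpr (max_le_max hmM le_rfl)
    have hB0 : 0 ≤ B := sub_nonneg.mpr (max_le_max (neg_le_neg hmM) le_rfl)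
    have hkeymax : ∀ x : ℝ, max x 0 - max (-x) 0 = x := by
      intro x
      rcases le_total x 0 with h | h
      · rw [max_eq_right h, max_eq_left (by linarith)]
        ring
      · rw [max_eq_left h, max_eq_right (by linarith)]
        ring
    have hAB : A + B = M - m := by
      rw [hA, hB]
      have h1 := hkeymax M
      have h2 := hkeymax m
      linarith
    have hgpsup : e.sup' he gp ≤ max M 0 :=
      Finset.sup'_le he gp fun v hv =>
        max_le_max (Finset.le_sup' (fun v => f v - c) hv) le_rfl
    have hgpinf : max m 0 ≤ e.inf' he gp :=
      Finset.le_inf' he gp fun v hv =>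
        max_le_max (Finset.inf'_le (fun v => f v - c) hv) le_rfl
    have hgpd : e.inf' he gp ≤ e.sup' he gp := by
      obtain ⟨v, hv⟩ := id he
      exact le_trans (Finset.inf'_le gp hv) (Finset.le_sup' gp hv)
    have hgmsup : e.sup' he gm ≤ max (-m) 0 :=
      Finset.sup'_le he gm fun v hv =>
        max_le_max (neg_le_neg (Finset.inf'_le (fun v => f v - c) hv)) le_rfl
    have hgminf : max (-M) 0 ≤ e.inf' he gm :=
      Finset.le_inf' he gm fun v hv =>
        max_le_max (neg_le_neg (Finset.le_sup' (fun v => f v - c) hv)) le_rfl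
    have hgmd : e.inf' he gm ≤ e.sup' he gm := by
      obtain ⟨v, hv⟩ := id he
      exact le_trans (Finset.inf'_le gm hv) (Finset.le_sup' gm hv)
    have h1 : (e.sup' he gp - e.inf' he gp) ^ 2 ≤ A ^ 2 :=
      pow_le_pow_left₀ (by linarith) (by rw [hA]; linarith) 2
    have h2 : (e.sup' he gm - e.inf' he gm) ^ 2 ≤ B ^ 2 :=
      pow_le_pow_left₀ (by linarith) (by rw [hB]; linarith) 2
    have h3 : A ^ 2 + B ^ 2 ≤ (M - m) ^ 2 := by
      rw [← hAB]
      nlinarith [mul_nonneg hA0 hB0]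
    linarith
  set Np := ∑ e ∈ H.E, H.w e * H.edgeDisc gp e with hNpdef
  set Nm := ∑ e ∈ H.E, H.w e * H.edgeDisc gm e with hNmdef
  have hNp0 : 0 ≤ Np :=
    Finset.sum_nonneg fun e heE => mul_nonneg (le_of_lt (H.w_pos e heE)) (hedN gp e heE)
  have hNm0 : 0 ≤ Nm :=
    Finset.sum_nonneg fun e heE => mul_nonneg (le_of_lt (H.w_pos e heE)) (hedN gm e heE)
  have hNsum : Np + Nm ≤ D * (Sp + Sm) := by
    calc Np + Nm = ∑ e ∈ H.E, H.w e * (H.edgeDisc gp e + H.edgeDisc gm e) := by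
          rw [hNpdef, hNmdef, ← Finset.sum_add_distrib]
          exact Finset.sum_congr rfl fun e _ => by ring
      _ ≤ ∑ e ∈ H.E, H.w e * H.edgeDisc (fun v => f v - c) e :=
          Finset.sum_le_sum fun e heE =>
            mul_le_mul_of_nonneg_left (hsplit e heE) (le_of_lt (H.w_pos e heE))
      _ = ∑ e ∈ H.E, H.w e * H.edgeDisc f e :=
          Finset.sum_congr rfl fun e heE => by rw [hshift e heE]
      _ = D * ∑ u : V, H.wv u * f u ^ 2 := hNf
      _ ≤ D * ∑ u : V, H.wv u * (f u - c) ^ 2 := by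
          apply mul_le_mul_of_nonneg_left _ hD0
          rw [hnorm]
          nlinarith [sq_nonneg c, hWpos]
      _ = D * (Sp + Sm) := by rw [hSsum]
  have hSpSm : 0 < Sp + Sm := by
    rw [hSsum]
    have hfc : ∃ v, f v - c ≠ 0 := by
      by_contra hcon
      push_neg at hcon
      have hconst : ∀ v, f v = c := fun v => by have := hcon v; linarith
      have : ∑ u : V, H.wv u * f u = c * H.wS Finset.univ := by
        unfold EWHypergraph.wS
        rw [Finset.mul_sum]
        exact Finset.sum_congr rfl fun u _ => by rw [hconst u]; ring
      rw [hip] at this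
      have hc0 : c = 0 := by
        rcases mul_eq_zero.mp this.symm with h | h
        · exact h
        · linarith
      apply hf
      funext v
      rw [hconst v, hc0]
      rfl
    obtain ⟨v, hv⟩ := hfc
    apply Finset.sum_pos' (fun u _ => mul_nonneg (wv_nonneg' H u) (sq_nonneg _))
    exact ⟨v, mem_univ v, mul_pos (hw v) (by positivity)⟩
  -- choose side
  have hkey : (0 < Sp ∧ Np ≤ D * Sp) ∨ (0 < Sm ∧ Nm ≤ D * Sm) := by
    by_cases h1 : Np ≤ D * Sp
    · rcases lt_or_eq_of_le hSp0 with h2 | h2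
      · exact Or.inl ⟨h2, h1⟩
      · right
        have hDS : D * (Sp + Sm) = D * Sm := by rw [← h2]; ring
        constructor
        · linarith
        · linarith
    · right
      push_neg at h1
      have hNm : Nm < D * Sm := by linarith
      have hSm : 0 < Sm := by
        rcases lt_or_eq_of_le hSm0 with h | h
        · exact h
        · exfalso
          rw [← h] at hNm
          simp at hNm
          linarith
      exact ⟨hSm, le_of_lt hNm⟩
  -- support identities
  have hsuppp : Finset.univ.filter (fun v => gp v ≠ 0) = Finset.univ.filter (fun v => c < f v) := by
    ext v
    simp only [Finset.mem_filter, Finset.mem_univ, true_and, hgpdef]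
    constructor
    · intro h
      by_contra hcon
      push_neg at hcon
      exact h (sup_eq_right.mpr (by linarith))
    · intro h hx
      rw [sup_eq_left.mpr (by linarith : (0:ℝ) ≤ f v - c)] at hx
      linarith
  have hsuppm : Finset.univ.filter (fun v => gm v ≠ 0) = Finset.univ.filter (fun v => f v < c) := by
    ext v
    simp only [Finset.mem_filter, Finset.mem_univ, true_and, hgmdef]
    constructor
    · intro h
      by_contra hcon
      push_neg at hcon
      exact h (sup_eq_right.mpr (by linarith))
    · intro h hx
      rw [sup_eq_left.mpr (by linarith : (0:ℝ) ≤ -(f v - c))] at hx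
      linarith
  rcases hkey with ⟨hSp, hNp⟩ | ⟨hSm, hNm⟩
  · exact sweep H hw gp D (rn : ℝ) hgp0 hrpos hre hSp
      (by rw [hsuppp]; exact hc1) hWpos hD0 hNp
  · exact sweep H hw gm D (rn : ℝ) hgm0 hrpos hre hSm
      (by rw [hsuppm]; exact hc2) hWpos hD0 hNm
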